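/- In A, the Casimir element C q⁻¹-commutes with f: f·C = q⁻¹·C·f. -/
import Mathlib


/-- the Casimir element `C = 2·e·f − h + (q/2)·h²` q⁻¹-commutes with `f`:
`f·C = q⁻¹·C·f`. -/
theorem jz_casimir_qinv_commutes_f {A : Type*} [Ring A] [Algebra ℂ A]
    (q : ℂ) (hq : q ≠ 0) (e f h : A)
    (rel1 : q • (h * e) - e * h = 2 * e)
    (rel2 : h * f - q • (f * h) = -(2 * f))
    (rel3 : e * f - q • (f * e) = h + ((1 - q) / 4) • h ^ 2)
    (C : A) (hC : C = 2 * (e * f) - h + (q / 2) • h ^ 2) :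
    f * C = q⁻¹ • (C * f) := by
  have hf : h * f = -(2 * f) + q • (f * h) := sub_eq_iff_eq_add.mp rel2
  have ef : e * f = (h + ((1 - q) / 4) • h ^ 2) + q • (f * e) := sub_eq_iff_eq_add.mp rel3
  have hf' : ∀ x : A, h * (f * x) = -(2 * (f * x)) + q • (f * (h * x)) := by
    intro x
    rw [← mul_assoc, hf]
    simp only [add_mul, neg_mul, smul_mul_assoc, mul_assoc]
  have ef' : ∀ x : A, e * (f * x) =
      (h * x + ((1 - q) / 4) • (h ^ 2 * x)) + q • (f * (e * x)) := by
    intro x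
    rw [← mul_assoc, ef]
    simp only [add_mul, smul_mul_assoc, mul_assoc]
  have key : q • (f * C) = C * f := by
    simp only [hC, ef, ef', hf, hf', pow_two, mul_add, add_mul, mul_sub, sub_mul, mul_neg,
      neg_mul, smul_mul_assoc, mul_smul_comm, smul_smul, smul_add, smul_sub, smul_neg,
      mul_assoc, two_mul]
    module
  rw [← key, smul_smul, inv_mul_cancel₀ hq, one_smul]
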